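/- Consider target region Ω = [0,1] with uniform density, one FC at q ∈ ℝ, two APs with weights a_1, a_2 > 0 and cell boundary r ∈ (0,1), AP positions determined by p_1 = (r + 2β'q)/(2(1+β')) and p_2 = (1 + r + 2β'q)/(2(1+β')) with β' > 0. Then among the stationary points of the total two-tier power, the choice r = q = 1/(1 + √(a_1/a_2)) gives total power P = ((4β'+1)/(12(β'+1)))·(√(a_1a_2)/(√a_1 + √a_2))². -/

import Mathlib

lemma integ_sq_sub (p a b : ℝ) :
    ∫ w in a..b, (p - w) ^ 2 = ((p - a) ^ 3 - (p - b) ^ 3) / 3 := by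
  have h : ∀ x ∈ Set.uIcc a b,
      HasDerivAt (fun w : ℝ => -(p - w) ^ 3 / 3) ((p - x) ^ 2) x := by
    intro x _
    have h1 : HasDerivAt (fun w : ℝ => p - w) (-1) x := (hasDerivAt_id x).const_sub p
    have h2 : HasDerivAt (fun w : ℝ => -(p - w) ^ 3 / 3) (-((3 : ℕ) * (p - x) ^ (3 - 1) * -1) / 3) x :=
      (h1.pow 3).neg.div_const 3
    convert h2 using 1
    ring
  have hint : IntervalIntegrable (fun w : ℝ => (p - w) ^ 2) MeasureTheory.volume a b :=
    ((continuous_const.sub continuous_id).pow 2).intervalIntegrable a b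
  have := intervalIntegral.integral_eq_sub_of_hasDerivAt h hint
  rw [this]; ring

lemma integ_full (p c β' q a b : ℝ) :
    ∫ w in a..b, ((p - w) ^ 2 + β' * (p - q) ^ 2)
      = ((p - a) ^ 3 - (p - b) ^ 3) / 3 + (b - a) * (β' * (p - q) ^ 2) := by
  have hint : IntervalIntegrable (fun w : ℝ => (p - w) ^ 2) MeasureTheory.volume a b :=
    ((continuous_const.sub continuous_id).pow 2).intervalIntegrable a b
  rw [intervalIntegral.integral_add hint (intervalIntegrable_const),
    integ_sq_sub, intervalIntegral.integral_const, smul_eq_mul]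

set_option maxHeartbeats 2000000 in
/-- For the two-AP, one-FC example on [0,1] with uniform density,
the stationary point r = q = 1/(1+√(a₁/a₂)) yields total two-tier power
((4β'+1)/(12(β'+1)))·(√(a₁a₂)/(√a₁+√a₂))². -/
theorem two_ap_one_fc_stationary_power
    (a1 a2 β' : ℝ) (ha1 : 0 < a1) (ha2 : 0 < a2) (hβ : 0 < β')
    (r q p1 p2 : ℝ)
    (hr : r = 1 / (1 + Real.sqrt (a1 / a2)))
    (hq : q = 1 / (1 + Real.sqrt (a1 / a2)))
    (hp1 : p1 = (r + 2 * β' * q) / (2 * (1 + β')))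
    (hp2 : p2 = (1 + r + 2 * β' * q) / (2 * (1 + β'))) :
    a1 * (∫ w in (0:ℝ)..r, ((p1 - w) ^ 2 + β' * (p1 - q) ^ 2))
      + a2 * (∫ w in r..(1:ℝ), ((p2 - w) ^ 2 + β' * (p2 - q) ^ 2))
      = ((4 * β' + 1) / (12 * (β' + 1)))
          * (Real.sqrt (a1 * a2) / (Real.sqrt a1 + Real.sqrt a2)) ^ 2 := by
  set s := Real.sqrt (a1 / a2) with hs
  have hs0 : 0 < s := Real.sqrt_pos.mpr (div_pos ha1 ha2)
  have hsa2 : 0 < Real.sqrt a2 := Real.sqrt_pos.mpr ha2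
  have hsq : s ^ 2 = a1 / a2 := Real.sq_sqrt (div_pos ha1 ha2).le
  have ha1e : a1 = s ^ 2 * a2 := by
    rw [eq_div_iff ha2.ne'] at hsq; linarith
  have hsqrt1 : Real.sqrt a1 = s * Real.sqrt a2 := by
    rw [hs, Real.sqrt_div ha1.le, div_mul_cancel₀ _ hsa2.ne']
  have hsqrt12 : Real.sqrt (a1 * a2) = s * a2 := by
    rw [Real.sqrt_mul ha1.le, hsqrt1, mul_assoc, Real.mul_self_sqrt ha2.le]
  have h1s : (1 : ℝ) + s ≠ 0 := by positivity
  have hβ1 : (1 : ℝ) + β' ≠ 0 := by positivity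
  have hqr : q = r := hq.trans hr.symm
  have key1 : ((p1 - 0) ^ 3 - (p1 - r) ^ 3) / 3 + (r - 0) * (β' * (p1 - q) ^ 2)
      = r ^ 3 * (4 * β' + 1) / (12 * (β' + 1)) := by
    rw [hp1, hqr]
    field_simp
    ring
  have key2 : ((p2 - r) ^ 3 - (p2 - 1) ^ 3) / 3 + (1 - r) * (β' * (p2 - q) ^ 2)
      = (1 - r) ^ 3 * (4 * β' + 1) / (12 * (β' + 1)) := by
    rw [hp2, hqr]
    field_simp
    ring
  rw [integ_full p1 0 β' q 0 r, integ_full p2 0 β' q r 1, key1, key2,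
    hsqrt12, hsqrt1, hr, ha1e]
  have ha2sq : Real.sqrt a2 ^ 2 = a2 := Real.sq_sqrt ha2.le
  have h3 : (s * Real.sqrt a2 + Real.sqrt a2) ^ 2 = (1 + s) ^ 2 * a2 := by
    have h4 : (s * Real.sqrt a2 + Real.sqrt a2) ^ 2 = (1 + s) ^ 2 * Real.sqrt a2 ^ 2 := by ring
    rw [h4, ha2sq]
  rw [div_pow (s * a2) (s * Real.sqrt a2 + Real.sqrt a2), h3]
  field_simp
  ring
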